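/- With $P_j^*(\mu) = \sum_k (\phi_k^j,\mu)\delta_{x_k^j}$ the dual hat-function projection on probability measures on $[0,M]^d$, one has $\|P_j^*\mu - \mu\|_{bLip^*} \le 2^d d \frac{M}{j}$ for every probability measure $\mu$, where $\|\eta\|_{bLip^*} = \sup\{|(f,\eta)| : \|f\|_\infty + \|f\|_{Lip} \le 1\}$. -/

import Mathlib

open MeasureTheory

/-- The bounded-Lipschitz dual norm distance `‖μ - η‖_{bLip*}`. -/
noncomputable def dBL (d : ℕ) (μ η : Measure (Fin d → ℝ)) : ℝ :=
  ⨆ f : {f : (Fin d → ℝ) → ℝ //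
      ∃ C L : ℝ, 0 ≤ C ∧ 0 ≤ L ∧ C + L ≤ 1 ∧ (∀ x, |f x| ≤ C) ∧
        ∀ x y, |f x - f y| ≤ L * ∑ i, |x i - y i|},
    |(∫ x, f.1 x ∂μ) - ∫ x, f.1 x ∂η|

/-- The dual hat-function projection `P_j^* μ = ∑_k (φ_k^j, μ) δ_{x_k^j}`. -/
noncomputable def dualProj (d j : ℕ) (M : ℝ)
    (φ : (Fin d → Fin (j + 1)) → (Fin d → ℝ) → ℝ)
    (μ : Measure (Fin d → ℝ)) : Measure (Fin d → ℝ) :=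
  ∑ k : Fin d → Fin (j + 1),
    ENNReal.ofReal (∫ x, φ k x ∂μ) • Measure.dirac (fun i => (k i : ℝ) * (M / j))

lemma chi_nonneg (χ : ℝ → ℝ) (hχ : ∀ t, χ t = max (1 - |t|) 0) (t : ℝ) : 0 ≤ χ t := by
  rw [hχ]; exact le_max_right _ _

lemma chi_le_one (χ : ℝ → ℝ) (hχ : ∀ t, χ t = max (1 - |t|) 0) (t : ℝ) : χ t ≤ 1 := by
  rw [hχ]; exact max_le (by have := abs_nonneg t; linarith) zero_le_one

lemma chi_eq_zero (χ : ℝ → ℝ) (hχ : ∀ t, χ t = max (1 - |t|) 0) {t : ℝ} (ht : 1 ≤ |t|) :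
    χ t = 0 := by
  rw [hχ]; exact max_eq_right (by linarith)

lemma hatSum (n : ℕ) (hn : 1 ≤ n) : ∀ t : ℝ, 0 ≤ t → t ≤ n →
    ∑ k ∈ Finset.range (n+1), max (1 - |t - (k:ℝ)|) 0 = 1 := by
  induction n, hn using Nat.le_induction with
  | base =>
    intro t h0 h1
    push_cast at h1
    norm_num [Finset.sum_range_succ]
    rw [abs_of_nonneg h0, abs_of_nonpos (by linarith : t - 1 ≤ 0)]
    rw [max_eq_left (by linarith), max_eq_left (by linarith)]
    ring
  | succ n hn ih =>
    intro t h0 h1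
    by_cases h : t ≤ n
    · rw [Finset.sum_range_succ, ih t h0 h]
      have habs : (1:ℝ) ≤ |t - ((n+1:ℕ):ℝ)| := by
        push_cast
        rw [abs_of_nonpos (by linarith)]
        linarith
      rw [max_eq_right (by linarith), add_zero]
    · push_neg at h
      push_cast at h1
      rw [Finset.sum_range_succ, Finset.sum_range_succ,
        Finset.sum_eq_zero, zero_add]
      · push_cast
        rw [abs_of_nonneg (by linarith : (0:ℝ) ≤ t - n),
          abs_of_nonpos (by linarith : t - ((n:ℝ)+1) ≤ 0)]
        rw [max_eq_left (by linarith), max_eq_left (by linarith)]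
        ring
      · intro k hk
        have hk1 : k + 1 ≤ n := Finset.mem_range.mp hk
        have hk' : (k:ℝ) ≤ (n:ℝ) - 1 := by
          have : ((k+1:ℕ):ℝ) ≤ n := by exact_mod_cast hk1
          push_cast at this; linarith
        have h1' : 1 ≤ |t - k| := by
          rw [abs_of_nonneg (by linarith)]; linarith
        exact max_eq_right (by linarith)

lemma phiSum (d j : ℕ) (hj : 0 < j) (M : ℝ) (hM : 0 < M)
    (χ : ℝ → ℝ) (hχ : ∀ t, χ t = max (1 - |t|) 0)
    (φ : (Fin d → Fin (j + 1)) → (Fin d → ℝ) → ℝ)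
    (hφ : ∀ k x, φ k x = ∏ i, χ ((j / M) * (x i - (k i : ℝ) * (M / j))))
    (x : Fin d → ℝ) (hx : ∀ i, x i ∈ Set.Icc (0:ℝ) M) :
    ∑ k : Fin d → Fin (j+1), φ k x = 1 := by
  have hj' : (j:ℝ) ≠ 0 := Nat.cast_ne_zero.mpr hj.ne'
  simp only [hφ]
  have key := Finset.prod_univ_sum (fun _ : Fin d => (Finset.univ : Finset (Fin (j+1))))
    (fun i a => χ ((j / M) * (x i - (a : ℝ) * (M / j))))
  rw [Fintype.piFinset_univ] at key
  rw [← key]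
  have hone : ∀ i : Fin d, ∑ a : Fin (j+1), χ ((j / M) * (x i - (a : ℝ) * (M / j))) = 1 := by
    intro i
    have harg : ∀ a : Fin (j+1), (j / M : ℝ) * (x i - (a : ℝ) * (M / j))
        = (j / M) * x i - a := by
      intro a; field_simp
    simp only [harg, hχ]
    rw [Fin.sum_univ_eq_sum_range (fun a => max (1 - |(j / M) * x i - (a:ℝ)|) 0)]
    apply hatSum j hj
    · exact mul_nonneg (by positivity) (hx i).1
    · rw [div_mul_eq_mul_div, div_le_iff₀ hM]
      have := (hx i).2
      nlinarith [hj.le]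
  exact Finset.prod_eq_one fun i _ => hone i

lemma phiSupport (d j : ℕ) (hj : 0 < j) (M : ℝ) (hM : 0 < M)
    (χ : ℝ → ℝ) (hχ : ∀ t, χ t = max (1 - |t|) 0)
    (φ : (Fin d → Fin (j + 1)) → (Fin d → ℝ) → ℝ)
    (hφ : ∀ k x, φ k x = ∏ i, χ ((j / M) * (x i - (k i : ℝ) * (M / j))))
    (k : Fin d → Fin (j+1)) (x : Fin d → ℝ) (h : φ k x ≠ 0) (i : Fin d) :
    |x i - (k i : ℝ) * (M / j)| ≤ M / j := by
  by_contra hc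
  push_neg at hc
  apply h
  rw [hφ]
  apply Finset.prod_eq_zero (Finset.mem_univ i)
  apply chi_eq_zero χ hχ
  rw [abs_mul, abs_of_nonneg (by positivity : (0:ℝ) ≤ (j:ℝ)/M)]
  rw [← div_le_iff₀' (by positivity : (0:ℝ) < (j:ℝ)/M), one_div_div]
  exact hc.le

lemma phi_nonneg (d j : ℕ) (M : ℝ)
    (χ : ℝ → ℝ) (hχ : ∀ t, χ t = max (1 - |t|) 0)
    (φ : (Fin d → Fin (j + 1)) → (Fin d → ℝ) → ℝ)
    (hφ : ∀ k x, φ k x = ∏ i, χ ((j / M) * (x i - (k i : ℝ) * (M / j))))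
    (k : Fin d → Fin (j+1)) (x : Fin d → ℝ) : 0 ≤ φ k x := by
  rw [hφ]; exact Finset.prod_nonneg fun i _ => chi_nonneg χ hχ _

lemma phi_le_one (d j : ℕ) (M : ℝ)
    (χ : ℝ → ℝ) (hχ : ∀ t, χ t = max (1 - |t|) 0)
    (φ : (Fin d → Fin (j + 1)) → (Fin d → ℝ) → ℝ)
    (hφ : ∀ k x, φ k x = ∏ i, χ ((j / M) * (x i - (k i : ℝ) * (M / j))))
    (k : Fin d → Fin (j+1)) (x : Fin d → ℝ) : φ k x ≤ 1 := by
  rw [hφ]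
  exact Finset.prod_le_one (fun i _ => chi_nonneg χ hχ _) (fun i _ => chi_le_one χ hχ _)

lemma phi_cont (d j : ℕ) (M : ℝ)
    (χ : ℝ → ℝ) (hχ : ∀ t, χ t = max (1 - |t|) 0)
    (φ : (Fin d → Fin (j + 1)) → (Fin d → ℝ) → ℝ)
    (hφ : ∀ k x, φ k x = ∏ i, χ ((j / M) * (x i - (k i : ℝ) * (M / j))))
    (k : Fin d → Fin (j+1)) : Continuous (φ k) := by
  have hc : Continuous χ := by
    have : χ = fun t => max (1 - |t|) 0 := funext hχ
    rw [this]; exact (continuous_const.sub continuous_abs).max continuous_const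
  have : φ k = fun x => ∏ i, χ ((j / M) * (x i - (k i : ℝ) * (M / j))) := funext (hφ k)
  rw [this]
  exact continuous_finset_prod _ fun i _ =>
    hc.comp (continuous_const.mul ((continuous_apply i).sub continuous_const))

lemma integrableBdd {d : ℕ} {f : (Fin d → ℝ) → ℝ} (hc : Continuous f) {C : ℝ}
    (hb : ∀ x, |f x| ≤ C) (ν : Measure (Fin d → ℝ)) [IsFiniteMeasure ν] :
    Integrable f ν :=
  ⟨hc.aestronglyMeasurable, HasFiniteIntegral.of_bounded
    (ae_of_all _ fun x => by simpa [Real.norm_eq_abs] using hb x)⟩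

/-- `‖P_j^* μ - μ‖_{bLip*} ≤ 2^d d (M/j)` for every probability measure `μ` on
`[0,M]^d`. -/
theorem stmt13
    (d j : ℕ) (hd : 0 < d) (hj : 0 < j) (M : ℝ) (hM : 0 < M)
    (χ : ℝ → ℝ) (hχ : ∀ t, χ t = max (1 - |t|) 0)
    (φ : (Fin d → Fin (j + 1)) → (Fin d → ℝ) → ℝ)
    (hφ : ∀ k x, φ k x = ∏ i, χ ((j / M) * (x i - (k i : ℝ) * (M / j))))
    (μ : Measure (Fin d → ℝ)) [IsProbabilityMeasure μ]
    (hμ : μ {x | ¬ ∀ i, x i ∈ Set.Icc (0:ℝ) M} = 0) :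
    dBL d (dualProj d j M φ μ) μ ≤ 2 ^ d * d * (M / j) := by
  have hMj : 0 < M / j := by positivity
  haveI : Nonempty {f : (Fin d → ℝ) → ℝ //
      ∃ C L : ℝ, 0 ≤ C ∧ 0 ≤ L ∧ C + L ≤ 1 ∧ (∀ x, |f x| ≤ C) ∧
        ∀ x y, |f x - f y| ≤ L * ∑ i, |x i - y i|} :=
    ⟨⟨fun _ => 0, 0, 0, le_refl 0, le_refl 0, by norm_num, fun x => by norm_num,
      fun x y => by simp⟩⟩
  rw [dBL]
  apply ciSup_le
  rintro ⟨f, C, L, hC, hL, hCL, hfb, hfl⟩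
  simp only
  have hcont : Continuous f := by
    apply LipschitzWith.continuous (K := Real.toNNReal (L * d))
    apply LipschitzWith.of_dist_le_mul
    intro x y
    rw [Real.coe_toNNReal _ (by positivity), Real.dist_eq]
    calc |f x - f y| ≤ L * ∑ i, |x i - y i| := hfl x y
      _ ≤ L * (d * dist x y) := by
          apply mul_le_mul_of_nonneg_left _ hL
          calc (∑ i, |x i - y i|) ≤ ∑ _i : Fin d, dist x y :=
                Finset.sum_le_sum fun i _ => by
                  rw [← Real.dist_eq]; exact dist_le_pi_dist x y i
            _ = d * dist x y := by simp [Finset.sum_const, nsmul_eq_mul]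
      _ = L * d * dist x y := by ring
  have hae : ∀ᵐ x ∂μ, ∀ i, x i ∈ Set.Icc (0:ℝ) M := by
    rw [ae_iff]; exact hμ
  set c : (Fin d → Fin (j+1)) → (Fin d → ℝ) := fun k i => (k i : ℝ) * (M / j) with hcdef
  have hintφ : ∀ k : Fin d → Fin (j+1), Integrable (fun x => φ k x) μ :=
    fun k => integrableBdd (phi_cont d j M χ hχ φ hφ k)
      (fun x => abs_le.mpr ⟨by linarith [phi_nonneg d j M χ hχ φ hφ k x],
        phi_le_one d j M χ hχ φ hφ k x⟩) μ
  have hPf : ∫ x, f x ∂(dualProj d j M φ μ)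
      = ∫ x, ∑ k : Fin d → Fin (j+1), φ k x * f (c k) ∂μ := by
    rw [dualProj, integral_finset_sum_measure]
    · rw [integral_finset_sum]
      · refine Finset.sum_congr rfl fun k _ => ?_
        rw [integral_smul_measure, integral_dirac,
          ENNReal.toReal_ofReal (integral_nonneg fun x => phi_nonneg d j M χ hχ φ hφ k x),
          MeasureTheory.integral_mul_const, smul_eq_mul]
      · exact fun k _ => (hintφ k).mul_const _
    · intro k _
      exact (integrableBdd hcont hfb _).smul_measure ENNReal.ofReal_ne_top
  have hμf : ∫ x, f x ∂μ = ∫ x, (∑ k : Fin d → Fin (j+1), φ k x) * f x ∂μ := by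
    apply integral_congr_ae
    filter_upwards [hae] with x hx
    rw [phiSum d j hj M hM χ hχ φ hφ x hx, one_mul]
  have hdiff : (∫ x, f x ∂(dualProj d j M φ μ)) - ∫ x, f x ∂μ
      = ∫ x, ∑ k : Fin d → Fin (j+1), φ k x * (f (c k) - f x) ∂μ := by
    rw [hPf, hμf, ← integral_sub]
    · congr 1; funext x
      rw [Finset.sum_mul, ← Finset.sum_sub_distrib]
      exact Finset.sum_congr rfl fun k _ => by ring
    · exact integrable_finset_sum _ fun k _ => (hintφ k).mul_const _
    · apply integrableBdd
        ((continuous_finset_sum _ fun k _ => phi_cont d j M χ hχ φ hφ k).mul hcont)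
        (C := ((Fintype.card (Fin d → Fin (j+1)) : ℝ)) * C)
      intro x
      simp only [Pi.mul_apply]; rw [abs_mul]
      apply mul_le_mul _ (hfb x) (abs_nonneg _) (by positivity)
      rw [abs_of_nonneg (Finset.sum_nonneg fun k _ => phi_nonneg d j M χ hχ φ hφ k x)]
      calc (∑ k : Fin d → Fin (j+1), φ k x)
          ≤ ∑ _k : Fin d → Fin (j+1), (1:ℝ) :=
            Finset.sum_le_sum fun k _ => phi_le_one d j M χ hχ φ hφ k x
        _ = Fintype.card (Fin d → Fin (j+1)) := by simp
  rw [hdiff]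
  have hL1 : L ≤ 1 := by linarith
  calc |∫ x, ∑ k : Fin d → Fin (j+1), φ k x * (f (c k) - f x) ∂μ|
      ≤ (d * (M / j)) * (μ Set.univ).toReal := by
        rw [← Real.norm_eq_abs]
        apply norm_integral_le_of_norm_le_const
        filter_upwards [hae] with x hx
        rw [Real.norm_eq_abs]
        calc |∑ k : Fin d → Fin (j+1), φ k x * (f (c k) - f x)|
            ≤ ∑ k : Fin d → Fin (j+1), |φ k x * (f (c k) - f x)| :=
              Finset.abs_sum_le_sum_abs _ _
          _ ≤ ∑ k : Fin d → Fin (j+1), φ k x * (d * (M / j)) := by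
              apply Finset.sum_le_sum
              intro k _
              rw [abs_mul, abs_of_nonneg (phi_nonneg d j M χ hχ φ hφ k x)]
              by_cases hk : φ k x = 0
              · simp [hk]
              · apply mul_le_mul_of_nonneg_left _ (phi_nonneg d j M χ hχ φ hφ k x)
                calc |f (c k) - f x| ≤ L * ∑ i, |c k i - x i| := hfl _ _
                  _ ≤ L * (d * (M / j)) := by
                      apply mul_le_mul_of_nonneg_left _ hL
                      calc (∑ i, |c k i - x i|) ≤ ∑ _i : Fin d, M / j :=
                            Finset.sum_le_sum fun i _ => by
                              rw [hcdef, abs_sub_comm]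
                              exact phiSupport d j hj M hM χ hχ φ hφ k x hk i
                        _ = d * (M / j) := by simp [Finset.sum_const, nsmul_eq_mul]
                  _ ≤ 1 * (d * (M / j)) := by
                      apply mul_le_mul_of_nonneg_right hL1 (by positivity)
                  _ = d * (M / j) := one_mul _
          _ = (∑ k : Fin d → Fin (j+1), φ k x) * (d * (M / j)) := by
              rw [Finset.sum_mul]
          _ = d * (M / j) := by rw [phiSum d j hj M hM χ hχ φ hφ x hx, one_mul]
    _ = d * (M / j) := by simp
    _ = 1 * ((d:ℝ) * (M / j)) := (one_mul _).symm
    _ ≤ 2 ^ d * ((d:ℝ) * (M / j)) := by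
        apply mul_le_mul_of_nonneg_right (one_le_pow₀ (by norm_num : (1:ℝ) ≤ 2))
        positivity
    _ = 2 ^ d * d * (M / j) := by ring
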